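/- A filter space X_p is weakly p-orderable if and only if there exists a nested subfamily 𝒫 of the filter p with ⋂𝒫 = ∅. -/

import Mathlib

open Set

universe u v w y

/-- The filter space topology on `Option X`: every point `some x` is isolated, and the
neighborhoods of the extra point `none` are the sets `P ∪ {none}` with `P ∈ p`. -/
def filterTop {X : Type u} (p : Filter X) : TopologicalSpace (Option X) where
  IsOpen U := none ∈ U → (Option.some ⁻¹' U) ∈ p
  isOpen_univ := fun _ => by simp
  isOpen_inter := fun U V hU hV h => by
    rw [Set.preimage_inter]
    exact Filter.inter_mem (hU h.1) (hV h.2)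
  isOpen_sUnion := fun S hS h => by
    rw [Set.mem_sUnion] at h
    obtain ⟨U, hUS, hU⟩ := h
    exact Filter.mem_of_superset (hS U hUS hU)
      (Set.preimage_mono (Set.subset_sUnion_of_mem hUS))

/-- A filter is free if `∅ ∉ p` and the intersection of all its members is empty. -/
def IsFree {X : Type u} (p : Filter X) : Prop :=
  (∅ : Set X) ∉ p ∧ ⋂₀ {P : Set X | P ∈ p} = ∅

/-- A family of sets is nested if any two members are comparable under inclusion. -/
def Nested {X : Type u} (F : Set (Set X)) : Prop :=
  ∀ P ∈ F, ∀ Q ∈ F, P ⊆ Q ∨ Q ⊆ P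

/-- The order topology of a linear order: generated by the open rays. -/
def ordTop {Z : Type u} (r : LinearOrder Z) : TopologicalSpace Z :=
  TopologicalSpace.generateFrom
    {S : Set Z | ∃ a : Z, S = {z | r.lt z a} ∨ S = {z | r.lt a z}}

/-- `(Z, t)` is weakly orderable by the linear order `r`: the order topology of `r`
is contained in `t`. -/
def WOBy {Z : Type u} (t : TopologicalSpace Z) (r : LinearOrder Z) : Prop :=
  ∀ S : Set Z, (ordTop r).IsOpen S → t.IsOpen S

def WeaklyOrderable {Z : Type u} (t : TopologicalSpace Z) : Prop :=
  ∃ r : LinearOrder Z, WOBy t r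

/-- Weakly `p`-orderable: weakly orderable by a linear order in which `p` is the maximum. -/
def WeaklyPOrderable {Z : Type u} (t : TopologicalSpace Z) (p : Z) : Prop :=
  ∃ r : LinearOrder Z, WOBy t r ∧ ∀ z : Z, r.le z p

def Orderable {Z : Type u} (t : TopologicalSpace Z) : Prop :=
  ∃ r : LinearOrder Z, ordTop r = t

/-- `p`-orderable: orderable by a linear order in which `p` is the maximum. -/
def POrderable {Z : Type u} (t : TopologicalSpace Z) (p : Z) : Prop :=
  ∃ r : LinearOrder Z, ordTop r = t ∧ ∀ z : Z, r.le z p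

/-- The approaching number of a point `p`: the least cardinality of a set
`A ⊆ Z \ {p}` with `p ∈ closure A`. -/
noncomputable def aNum {Z : Type u} (t : TopologicalSpace Z) (p : Z) : Cardinal.{u} :=
  sInf {c : Cardinal.{u} | ∃ A : Set Z, p ∉ A ∧ p ∈ @closure Z t A ∧ c = Cardinal.mk ↥A}

/-- The pseudo-character of a point `p`: the least cardinality of a family of open sets
whose intersection is `{p}`. -/
noncomputable def psiNum {Z : Type u} (t : TopologicalSpace Z) (p : Z) : Cardinal.{u} :=
  sInf {c : Cardinal.{u} | ∃ Us : Set (Set Z),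
    (∀ V ∈ Us, t.IsOpen V) ∧ ⋂₀ Us = {p} ∧ c = Cardinal.mk ↥Us}

/-- The approaching number of a space: minimum over non-isolated points. -/
noncomputable def aSp {Z : Type u} (t : TopologicalSpace Z) : Cardinal.{u} :=
  sInf {c : Cardinal.{u} | ∃ p : Z, ¬ t.IsOpen ({p} : Set Z) ∧ c = aNum t p}

/-- The pseudo-character of a space: supremum over points. -/
noncomputable def psiSp {Z : Type u} (t : TopologicalSpace Z) : Cardinal.{u} :=
  ⨆ p : Z, psiNum t p

/-- `‖p‖ = min {|P| : P ∈ p}`. -/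
noncomputable def fNorm {X : Type u} (p : Filter X) : Cardinal.{u} :=
  sInf {c : Cardinal.{u} | ∃ P ∈ p, c = Cardinal.mk ↥P}

/-- A selection relation: total and antisymmetric. -/
def SelRel {Z : Type u} (R : Z → Z → Prop) : Prop :=
  (∀ x y : Z, R x y ∨ R y x) ∧ (∀ x y : Z, R x y → R y x → x = y)

/-- Separate continuity of a selection relation: the open rays are open. -/
def SepCont {Z : Type u} (t : TopologicalSpace Z) (R : Z → Z → Prop) : Prop :=
  ∀ x : Z, t.IsOpen {z | R z x ∧ z ≠ x} ∧ t.IsOpen {z | R x z ∧ x ≠ z}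

/-- Continuity of a selection relation (Gutev–Nogura characterization). -/
def ContSel {Z : Type u} (t : TopologicalSpace Z) (R : Z → Z → Prop) : Prop :=
  ∀ x y : Z, R x y → x ≠ y →
    ∃ U V : Set Z, t.IsOpen U ∧ t.IsOpen V ∧ x ∈ U ∧ y ∈ V ∧
      ∀ u ∈ U, ∀ v ∈ V, R u v ∧ u ≠ v

/-- The subspace topology. -/
def subTop {Z : Type u} (t : TopologicalSpace Z) (S : Set Z) : TopologicalSpace ↥S :=
  TopologicalSpace.induced Subtype.val t

/-- The product topology. -/
def prodTop {A : Type u} {B : Type v} (tA : TopologicalSpace A) (tB : TopologicalSpace B) :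
    TopologicalSpace (A × B) :=
  TopologicalSpace.induced Prod.fst tA ⊓ TopologicalSpace.induced Prod.snd tB

/-- `C` is a club (closed unbounded) subset of the ordinal `o`. -/
def Club (o : Ordinal.{u}) (C : Set Ordinal.{u}) : Prop :=
  C ⊆ Set.Iio o ∧ (∀ α < o, ∃ β ∈ C, α ≤ β) ∧
  (∀ α < o, (α ≠ 0 ∧ ∀ β < α, Order.succ β < α) → (∀ β < α, ∃ γ ∈ C, β ≤ γ ∧ γ < α) → α ∈ C)

/-- `S` is a stationary subset of the ordinal `o`. -/
def StationaryIn (o : Ordinal.{u}) (S : Set Ordinal.{u}) : Prop :=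
  S ⊆ Set.Iio o ∧ ∀ C : Set Ordinal.{u}, Club o C → (S ∩ C).Nonempty
/-- A filter space `X_p` is weakly `p`-orderable if and only if there exists a
nested subfamily `𝒫` of the filter `p` with `⋂ 𝒫 = ∅`. -/
theorem stmt0 {X : Type u} [Infinite X] (p : Filter X) (hfree : IsFree p) :
    WeaklyPOrderable (filterTop p) (none : Option X) ↔
      ∃ F : Set (Set X), (∀ P ∈ F, P ∈ p) ∧ Nested F ∧ ⋂₀ F = (∅ : Set X) := by
  constructor
  · rintro ⟨r, hwo, hmax⟩
    letI := r
    refine ⟨{S | ∃ x : X, S = {y : X | r.lt (some x) (some y)}}, ?_, ?_, ?_⟩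
    · rintro P ⟨x, rfl⟩
      have hopen : (ordTop r).IsOpen {z : Option X | r.lt (some x) z} :=
        TopologicalSpace.GenerateOpen.basic _ ⟨some x, Or.inr rfl⟩
      have hne : r.lt (some x) none :=
        lt_of_le_of_ne (hmax (some x)) (Option.some_ne_none x)
      exact hwo _ hopen hne
    · rintro P ⟨x, rfl⟩ Q ⟨z, rfl⟩
      rcases le_total (some x : Option X) (some z) with h | h
      · exact Or.inr fun w hw => lt_of_le_of_lt h hw
      · exact Or.inl fun w hw => lt_of_le_of_lt h hw
    · rw [Set.eq_empty_iff_forall_notMem]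
      intro y hy
      have h1 : y ∈ {w : X | r.lt (some y) (some w)} :=
        hy {w : X | r.lt (some y) (some w)} ⟨y, rfl⟩
      exact lt_irrefl _ h1
  · rintro ⟨F, hFp, hnest, hint⟩
    classical
    letI r0 : LinearOrder X := IsWellOrder.linearOrder WellOrderingRel
    set Fx : X → Set (Set X) := fun x => {P | P ∈ F ∧ x ∈ P} with hFxdef
    have comp : ∀ x y : X, Fx x ⊆ Fx y ∨ Fx y ⊆ Fx x := by
      intro x y
      by_contra hc
      push_neg at hc
      obtain ⟨h1, h2⟩ := hc
      obtain ⟨P, hP, hPn⟩ := Set.not_subset.mp h1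
      obtain ⟨Q, hQ, hQn⟩ := Set.not_subset.mp h2
      rcases hnest P hP.1 Q hQ.1 with h | h
      · exact hQn ⟨hQ.1, h hP.2⟩
      · exact hPn ⟨hP.1, h hQ.2⟩
    set SLT : X → X → Prop :=
      fun x y => (Fx x ⊆ Fx y ∧ ¬ Fx y ⊆ Fx x) ∨ (Fx x = Fx y ∧ x < y) with hSLT
    have SLTtrans : ∀ x y z : X, SLT x y → SLT y z → SLT x z := by
      rintro x y z (⟨s1, n1⟩ | ⟨e1, l1⟩) (⟨s2, n2⟩ | ⟨e2, l2⟩)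
      · exact Or.inl ⟨s1.trans s2, fun h => n1 (s2.trans h)⟩
      · exact Or.inl ⟨s1.trans e2.subset, fun h => n1 (e2.symm ▸ h)⟩
      · exact Or.inl ⟨e1.subset.trans s2, fun h => n2 (h.trans e1.subset)⟩
      · exact Or.inr ⟨e1.trans e2, lt_trans l1 l2⟩
    set slt : Option X → Option X → Prop :=
      fun a b => ∃ x : X, a = some x ∧ (b = none ∨ ∃ y : X, b = some y ∧ SLT x y)
      with hslt
    have hirr : ∀ a, ¬ slt a a := by
      rintro a ⟨x, rfl, h | ⟨y, hy, h⟩⟩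
      · exact nomatch h
      · have hxy := Option.some.inj hy
        subst hxy
        rcases h with ⟨h1, h2⟩ | ⟨_, h2⟩
        · exact h2 h1
        · exact lt_irrefl _ h2
    have htrans : ∀ a b c, slt a b → slt b c → slt a c := by
      rintro a b c ⟨x, rfl, hb⟩ ⟨y, rfl, hc⟩
      rcases hb with hb | ⟨y', hb, hxy⟩
      · exact nomatch hb
      · have := Option.some.inj hb
        subst this
        refine ⟨x, rfl, ?_⟩
        rcases hc with hc | ⟨z, hc, hyz⟩
        · exact Or.inl hc
        · exact Or.inr ⟨z, hc, SLTtrans _ _ _ hxy hyz⟩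
    have htri : ∀ a b, slt a b ∨ a = b ∨ slt b a := by
      intro a b
      cases a with
      | none =>
        cases b with
        | none => exact Or.inr (Or.inl rfl)
        | some y => exact Or.inr (Or.inr ⟨y, rfl, Or.inl rfl⟩)
      | some x =>
        cases b with
        | none => exact Or.inl ⟨x, rfl, Or.inl rfl⟩
        | some y =>
          by_cases heq : Fx x = Fx y
          · rcases lt_trichotomy x y with h | h | h
            · exact Or.inl ⟨x, rfl, Or.inr ⟨y, rfl, Or.inr ⟨heq, h⟩⟩⟩
            · exact Or.inr (Or.inl (congrArg some h))
            · exact Or.inr (Or.inr ⟨y, rfl, Or.inr ⟨x, rfl, Or.inr ⟨heq.symm, h⟩⟩⟩)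
          · rcases comp x y with h | h
            · exact Or.inl ⟨x, rfl, Or.inr ⟨y, rfl,
                Or.inl ⟨h, fun h' => heq (Set.Subset.antisymm h h')⟩⟩⟩
            · exact Or.inr (Or.inr ⟨y, rfl, Or.inr ⟨x, rfl,
                Or.inl ⟨h, fun h' => heq (Set.Subset.antisymm h' h)⟩⟩⟩)
    letI i1 : IsTrichotomous (Option X) slt :=
      ⟨fun a b h1 h2 => ((htri a b).resolve_left h1).resolve_right h2⟩
    letI i2 : Trans slt slt slt := ⟨fun h1 h2 => htrans _ _ _ h1 h2⟩
    letI i3 : IsTrans (Option X) slt := ⟨htrans⟩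
    letI i4 : IsIrrefl (Option X) slt := ⟨hirr⟩
    letI i5 : IsStrictOrder (Option X) slt := {}
    letI i6 : IsStrictTotalOrder (Option X) slt := {}
    letI i7 : DecidableRel slt := Classical.decRel _
    refine ⟨linearOrderOfSTO slt, ?_, ?_⟩
    · intro S hS
      apply TopologicalSpace.le_generateFrom_iff_subset_isOpen.2 ?_ S hS
      rintro s ⟨a, rfl | rfl⟩
      · intro hn
        obtain ⟨x, hx, -⟩ := (hn : slt none a)
        exact nomatch hx
      · intro hn
        cases a with
        | none =>
          obtain ⟨x, hx, -⟩ := (hn : slt none none)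
          exact nomatch hx
        | some x =>
          have hx : x ∉ ⋂₀ F := by rw [hint]; exact Set.notMem_empty x
          rw [Set.mem_sInter] at hx
          push_neg at hx
          obtain ⟨P, hPF, hxP⟩ := hx
          refine Filter.mem_of_superset (hFp P hPF) ?_
          intro y hyP
          have hPy : P ∈ Fx y := ⟨hPF, hyP⟩
          have hnsub : ¬ Fx y ⊆ Fx x := fun h => hxP ((h hPy).2)
          have hsub : Fx x ⊆ Fx y := (comp x y).resolve_right hnsub
          exact ⟨x, rfl, Or.inr ⟨y, rfl, Or.inl ⟨hsub, hnsub⟩⟩⟩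
    · intro z
      cases z with
      | none => exact Or.inl rfl
      | some x => exact Or.inr ⟨x, rfl, Or.inl rfl⟩
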